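/- Let M be a unimodular positive-definite Hermitian 2×2 complex matrix with diagonal entries a = M₁₁ and d = M₂₂ (strictly positive reals). Then among all diagonal matrices diag(e^t, e^{−t}) with t ∈ ℝ, the distance dist(M, diag(e^t, e^{−t})) is minimized at e^t = √(a/d); that is, for every t ∈ ℝ, dist(M, diag(√(a/d), √(d/a))) ≤ dist(M, diag(e^t, e^{−t})). -/

import Mathlib

open Matrix
open scoped ComplexOrder

/-- The hyperbolic distance between two hermitian inner products on `ℂ²` (represented by
positive-definite matrices inducing the same volume): the maximal logarithmic expansion
of the `B`-norm relative to the `A`-norm. -/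
noncomputable def hdist (A B : Matrix (Fin 2) (Fin 2) ℂ) : ℝ :=
  ⨆ v : {v : Fin 2 → ℂ // v ≠ 0},
    (1 / 2) * Real.log ((star v.1 ⬝ᵥ B.mulVec v.1).re / (star v.1 ⬝ᵥ A.mulVec v.1).re)

/-- The diagonal unimodular positive matrix `diag(e^t, e^{-t})`, a point of the geodesic
of diagonal metrics determined by the splitting `ℂ² = ℂ ⊕ ℂ`. -/
noncomputable def diagExp (t : ℝ) : Matrix (Fin 2) (Fin 2) ℂ :=
  Matrix.diagonal (fun i => if i = 0 then ((Real.exp t : ℝ) : ℂ) else ((Real.exp (-t) : ℝ) : ℂ))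

namespace NPDGAux

noncomputable def lam (T : ℝ) : ℝ := (T + Real.sqrt (T^2 - 4)) / 2

lemma lam_ge_one {T : ℝ} (hT : 2 ≤ T) : 1 ≤ lam T := by
  have : 0 ≤ Real.sqrt (T^2 - 4) := Real.sqrt_nonneg _
  unfold lam; linarith

lemma sq_sub : ∀ {T : ℝ}, 2 ≤ T → Real.sqrt (T^2-4) ^ 2 = T^2 - 4 := by
  intro T hT
  rw [Real.sq_sqrt]; nlinarith

lemma lam_root {T : ℝ} (hT : 2 ≤ T) : lam T ^ 2 - T * lam T + 1 = 0 := by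
  have h := sq_sub hT
  unfold lam; nlinarith [h]

lemma le_lam {T x : ℝ} (hT : 2 ≤ T) (hx : x^2 - T*x + 1 ≤ 0) : x ≤ lam T := by
  have h1 : (x - T/2)^2 ≤ (T^2-4)/4 := by nlinarith
  have h2 : x - T/2 ≤ Real.sqrt ((T^2-4)/4) := by
    calc x - T/2 ≤ |x - T/2| := le_abs_self _
    _ = Real.sqrt ((x - T/2)^2) := (Real.sqrt_sq_eq_abs _).symm
    _ ≤ Real.sqrt ((T^2-4)/4) := Real.sqrt_le_sqrt h1
  have h3 : Real.sqrt ((T^2-4)/4) = Real.sqrt (T^2-4) / 2 := by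
    rw [show (T^2-4)/4 = (T^2-4)/2^2 by ring,
      Real.sqrt_div' _ (by norm_num : (0:ℝ) ≤ 2^2) , Real.sqrt_sq (by norm_num : (0:ℝ) ≤ 2)]
  unfold lam; linarith

lemma lam_mono {T₁ T₂ : ℝ} (h1 : 2 ≤ T₁) (h : T₁ ≤ T₂) : lam T₁ ≤ lam T₂ := by
  unfold lam
  have : Real.sqrt (T₁^2-4) ≤ Real.sqrt (T₂^2-4) := by
    apply Real.sqrt_le_sqrt; nlinarith
  linarith

lemma quad_nonneg {p q : ℝ} (r : ℂ) (hp : 0 ≤ p) (hq : 0 ≤ q)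
    (hdet : Complex.normSq r ≤ p*q) (x y : ℂ) :
    0 ≤ p * Complex.normSq x + q * Complex.normSq y + 2 * ((starRingEnd ℂ) x * r * y).re := by
  set X := ‖x‖ with hX
  set Y := ‖y‖ with hY
  set R := ‖r‖ with hR
  have hXn : 0 ≤ X := norm_nonneg _
  have hYn : 0 ≤ Y := norm_nonneg _
  have hRn : 0 ≤ R := norm_nonneg _
  have h1 : |((starRingEnd ℂ) x * r * y).re| ≤ X * R * Y := by
    calc |((starRingEnd ℂ) x * r * y).re| ≤ ‖(starRingEnd ℂ) x * r * y‖ :=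
      Complex.abs_re_le_norm _
    _ = X * R * Y := by rw [norm_mul, norm_mul, Complex.norm_conj]
  have h2 : -(X*R*Y) ≤ ((starRingEnd ℂ) x * r * y).re := by
    have := abs_le.mp h1; linarith [this.1]
  have hsq : Complex.normSq x = X^2 := by rw [hX, Complex.sq_norm]
  have hsqy : Complex.normSq y = Y^2 := by rw [hY, Complex.sq_norm]
  have hsqr : R^2 ≤ p*q := by rw [hR, Complex.sq_norm]; exact hdet
  rw [hsq, hsqy]
  have key : 2*(R*X*Y) ≤ p*X^2 + q*Y^2 := by
    nlinarith [mul_nonneg (sub_nonneg.2 hsqr) (sq_nonneg (X*Y)), sq_nonneg (p*X^2 - q*Y^2),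
      mul_nonneg (mul_nonneg hRn hXn) hYn, mul_nonneg hp (sq_nonneg X), mul_nonneg hq (sq_nonneg Y)]
  linarith

lemma diag_form (t : ℝ) (v : Fin 2 → ℂ) :
    (star v ⬝ᵥ (diagExp t).mulVec v).re
      = Real.exp t * Complex.normSq (v 0) + Real.exp (-t) * Complex.normSq (v 1) := by
  simp [diagExp, dotProduct, mulVec, Fin.sum_univ_two, diagonal, Complex.normSq_apply,
    Complex.mul_re, Complex.mul_im, Complex.exp_ofReal_re, Complex.exp_ofReal_im,
    ← Complex.ofReal_neg]
  ring

lemma herm_form (M : Matrix (Fin 2) (Fin 2) ℂ) (hH : M.IsHermitian) (v : Fin 2 → ℂ) :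
    (star v ⬝ᵥ M.mulVec v).re
      = (M 0 0).re * Complex.normSq (v 0) + (M 1 1).re * Complex.normSq (v 1)
        + 2 * ((starRingEnd ℂ) (v 0) * (M 0 1) * v 1).re := by
  have h10 : M 1 0 = (starRingEnd ℂ) (M 0 1) := by
    have := hH.apply 1 0
    exact this.symm
  have h00 : (M 0 0).im = 0 := by
    have := congrArg Complex.im (hH.apply 0 0)
    simp at this; linarith
  have h11 : (M 1 1).im = 0 := by
    have := congrArg Complex.im (hH.apply 1 1)
    simp at this; linarith
  simp [dotProduct, mulVec, Fin.sum_univ_two, h10, Complex.normSq_apply,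
    Complex.mul_re, Complex.mul_im, h00, h11]
  ring

/-- positivity and determinant facts -/
lemma basic (M : Matrix (Fin 2) (Fin 2) ℂ) (hM : M.PosDef) (hMdet : M.det = 1) :
    0 < (M 0 0).re ∧ 0 < (M 1 1).re
      ∧ Complex.normSq (M 0 1) = (M 0 0).re * (M 1 1).re - 1 := by
  have h00 : (M 0 0).im = 0 := by
    have := congrArg Complex.im (hM.1.apply 0 0); simp at this; linarith
  have h11 : (M 1 1).im = 0 := by
    have := congrArg Complex.im (hM.1.apply 1 1); simp at this; linarith
  have h10 : M 1 0 = (starRingEnd ℂ) (M 0 1) := (hM.1.apply 1 0).symm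
  have e0 : (![1, 0] : Fin 2 → ℂ) ≠ 0 := by
    intro h; have := congrFun h 0; simp at this
  have e1 : (![0, 1] : Fin 2 → ℂ) ≠ 0 := by
    intro h; have := congrFun h 1; simp at this
  have ha := hM.re_dotProduct_pos e0
  have hd := hM.re_dotProduct_pos e1
  rw [show ∀ z : ℂ, RCLike.re z = z.re from fun _ => rfl] at ha hd
  rw [herm_form M hM.1] at ha hd
  simp at ha hd
  refine ⟨ha, hd, ?_⟩
  have hdet2 := M.det_fin_two
  rw [hMdet, h10] at hdet2
  have him := congrArg Complex.re hdet2
  simp [Complex.mul_re, Complex.mul_im, h00, h11] at him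
  rw [Complex.normSq_apply]
  linarith [him]

set_option maxHeartbeats 2000000 in
lemma key (M : Matrix (Fin 2) (Fin 2) ℂ) (hM : M.PosDef) (hMdet : M.det = 1) (s : ℝ) :
    hdist M (diagExp s)
      = (1/2) * Real.log (lam ((M 1 1).re * Real.exp s + (M 0 0).re * Real.exp (-s))) := by
  obtain ⟨ha, hd, hn⟩ := basic M hM hMdet
  set a := (M 0 0).re
  set d := (M 1 1).re
  set b := M 0 1 with hb
  set E := Real.exp s with hE
  set E' := Real.exp (-s) with hE'
  have hEpos : 0 < E := Real.exp_pos _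
  have hE'pos : 0 < E' := Real.exp_pos _
  have hEE' : E * E' = 1 := by rw [hE, hE', ← Real.exp_add]; simp
  set T := d * E + a * E' with hT
  have had : 1 ≤ a * d := by nlinarith [Complex.normSq_nonneg b]
  have hT2 : 2 ≤ T := by
    nlinarith [sq_nonneg (Real.sqrt (d*E) - Real.sqrt (a*E')),
      Real.sq_sqrt (by positivity : (0:ℝ) ≤ d*E), Real.sq_sqrt (by positivity : (0:ℝ) ≤ a*E'),
      Real.sqrt_nonneg (d*E), Real.sqrt_nonneg (a*E'),
      mul_nonneg (Real.sqrt_nonneg (d*E)) (Real.sqrt_nonneg (a*E'))]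
  set L := lam T with hL
  have hL1 : 1 ≤ L := lam_ge_one hT2
  have hLpos : 0 < L := by linarith
  have hroot : L^2 - (d*E + a*E')*L + 1 = 0 := by rw [← hT]; exact lam_root hT2
  set p := L * a - E with hp
  set q := L * d - E' with hq
  have hppos : 0 ≤ p := by
    have hx : (E/a)^2 - T*(E/a) + 1 ≤ 0 := by
      have expand : a^2 * ((E/a)^2 - T*(E/a) + 1) = E^2*(1 - a*d) + a^2*(1 - E*E') := by
        rw [hT]; field_simp; ring
      rw [hEE'] at expand
      by_contra hcon
      push_neg at hcon
      have key : a^2 * ((E/a)^2 - T*(E/a) + 1) ≤ 0 := by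
        rw [expand]
        nlinarith [mul_nonneg (sq_nonneg E) (by linarith : (0:ℝ) ≤ a*d - 1)]
      nlinarith [mul_pos (pow_pos ha 2) hcon]
    have := le_lam hT2 hx
    rw [hp]
    rw [div_le_iff₀ ha] at this
    linarith [this]
  have hqpos : 0 ≤ q := by
    have hx : (E'/d)^2 - T*(E'/d) + 1 ≤ 0 := by
      have expand : d^2 * ((E'/d)^2 - T*(E'/d) + 1) = E'^2*(1 - a*d) + d^2*(1 - E*E') := by
        rw [hT]; field_simp; ring
      rw [hEE'] at expand
      by_contra hcon
      push_neg at hcon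
      have key : d^2 * ((E'/d)^2 - T*(E'/d) + 1) ≤ 0 := by
        rw [expand]
        nlinarith [mul_nonneg (sq_nonneg E') (by linarith : (0:ℝ) ≤ a*d - 1)]
      nlinarith [mul_pos (pow_pos hd 2) hcon]
    have := le_lam hT2 hx
    rw [hq]
    rw [div_le_iff₀ hd] at this
    linarith [this]
  have hpq : L^2 * Complex.normSq b = p * q := by
    rw [hp, hq, hn]
    linear_combination (-1) * hroot - hEE'
  -- upper bound on the quadratic form ratio
  have upper : ∀ v : Fin 2 → ℂ,
      (star v ⬝ᵥ (diagExp s).mulVec v).re ≤ L * (star v ⬝ᵥ M.mulVec v).re := by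
    intro v
    rw [diag_form, herm_form M hM.1]
    have hnsr : Complex.normSq ((L:ℂ) * b) = p * q := by
      rw [Complex.normSq_mul, Complex.normSq_ofReal, ← hpq]; ring
    have h0 := quad_nonneg ((L:ℂ) * b) hppos hqpos hnsr.le (v 0) (v 1)
    have hre : ((starRingEnd ℂ) (v 0) * ((L:ℂ) * b) * (v 1)).re
        = L * ((starRingEnd ℂ) (v 0) * b * (v 1)).re := by
      rw [show (starRingEnd ℂ) (v 0) * ((L:ℂ) * b) * (v 1)
          = (L:ℂ) * ((starRingEnd ℂ) (v 0) * b * (v 1)) by ring]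
      simp [Complex.re_ofReal_mul]
    rw [hre] at h0
    rw [hp, hq] at h0
    linarith [h0]
  -- attainment
  have attain : ∃ v : {v : Fin 2 → ℂ // v ≠ 0},
      (star v.1 ⬝ᵥ (diagExp s).mulVec v.1).re = L * (star v.1 ⬝ᵥ M.mulVec v.1).re := by
    rcases eq_or_lt_of_le hqpos with hq0 | hq0
    · refine ⟨⟨![0, 1], by intro h; have := congrFun h 1; simp at this⟩, ?_⟩
      rw [diag_form, herm_form M hM.1]
      simp
      rw [hq] at hq0
      linarith [hq0]
    · refine ⟨⟨![((q:ℝ):ℂ), -(starRingEnd ℂ) ((L:ℂ) * b)],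
        by intro h; have := congrFun h 0; simp [Complex.ext_iff] at this; nlinarith [hq0, this]⟩, ?_⟩
      rw [diag_form, herm_form M hM.1]
      have h1 : Complex.normSq (((q:ℝ):ℂ)) = q^2 := by
        rw [Complex.normSq_ofReal]; ring
      have h2 : Complex.normSq (-(starRingEnd ℂ) ((L:ℂ) * b)) = L^2 * Complex.normSq b := by
        rw [Complex.normSq_neg, Complex.normSq_conj, Complex.normSq_mul, Complex.normSq_ofReal]
        ring
      have h3 : ((starRingEnd ℂ) ((q:ℝ):ℂ) * b * (-(starRingEnd ℂ) ((L:ℂ) * b))).re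
          = -(q * L * Complex.normSq b) := by
        have : (starRingEnd ℂ) ((q:ℝ):ℂ) * b * (-(starRingEnd ℂ) ((L:ℂ) * b))
            = ((-(q * L * Complex.normSq b) : ℝ) : ℂ) := by
          rw [Complex.conj_ofReal, _root_.map_mul, Complex.conj_ofReal]
          rw [show ((q:ℝ):ℂ) * b * -((L:ℂ) * (starRingEnd ℂ) b)
              = -(((q:ℝ):ℂ) * (L:ℂ) * (b * (starRingEnd ℂ) b)) by ring]
          rw [Complex.mul_conj]
          push_cast
          ring
        rw [this, Complex.ofReal_re]
      simp only [Matrix.cons_val_zero, Matrix.cons_val_one, Matrix.head_cons]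
      rw [h1, h2, h3]
      rw [hq]
      linear_combination (L*d - E') * hpq
  -- positivity of denominators/numerators
  have den_pos : ∀ v : {v : Fin 2 → ℂ // v ≠ 0}, 0 < (star v.1 ⬝ᵥ M.mulVec v.1).re := by
    intro v
    have := hM.re_dotProduct_pos v.2
    rwa [show ∀ z : ℂ, RCLike.re z = z.re from fun _ => rfl] at this
  have num_pos : ∀ v : {v : Fin 2 → ℂ // v ≠ 0}, 0 < (star v.1 ⬝ᵥ (diagExp s).mulVec v.1).re := by
    intro v
    rw [diag_form]
    have hv : v.1 0 ≠ 0 ∨ v.1 1 ≠ 0 := by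
      by_contra h
      push_neg at h
      exact v.2 (funext fun i => by fin_cases i <;> simp [h.1, h.2])
    rcases hv with h | h
    · have := Complex.normSq_pos.2 h
      nlinarith [Complex.normSq_nonneg (v.1 1)]
    · have := Complex.normSq_pos.2 h
      nlinarith [Complex.normSq_nonneg (v.1 0)]
  -- sup computation
  haveI : Nonempty {v : Fin 2 → ℂ // v ≠ 0} :=
    ⟨⟨![1, 0], by intro h; have := congrFun h 0; simp at this⟩⟩
  have ub : ∀ v : {v : Fin 2 → ℂ // v ≠ 0},
      (1 / 2) * Real.log ((star v.1 ⬝ᵥ (diagExp s).mulVec v.1).re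
        / (star v.1 ⬝ᵥ M.mulVec v.1).re) ≤ (1/2) * Real.log L := by
    intro v
    have h1 : (star v.1 ⬝ᵥ (diagExp s).mulVec v.1).re / (star v.1 ⬝ᵥ M.mulVec v.1).re ≤ L := by
      rw [div_le_iff₀ (den_pos v)]
      exact upper v.1
    have h2 : 0 < (star v.1 ⬝ᵥ (diagExp s).mulVec v.1).re / (star v.1 ⬝ᵥ M.mulVec v.1).re :=
      div_pos (num_pos v) (den_pos v)
    have := Real.log_le_log h2 h1
    linarith
  apply le_antisymm
  · exact ciSup_le ub
  · obtain ⟨v₀, hv₀⟩ := attain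
    have hval : (1 / 2) * Real.log ((star v₀.1 ⬝ᵥ (diagExp s).mulVec v₀.1).re
        / (star v₀.1 ⬝ᵥ M.mulVec v₀.1).re) = (1/2) * Real.log L := by
      rw [hv₀, mul_div_assoc, div_self (den_pos v₀).ne']
      ring_nf
    rw [← hval]
    exact le_ciSup ⟨(1/2) * Real.log L, Set.forall_mem_range.2 ub⟩ v₀

end NPDGAux

/-- For a unimodular positive-definite Hermitian `2×2` matrix `M` with
diagonal entries `a = M₁₁`, `d = M₂₂`, the distance from `M` to the diagonal geodesic
`t ↦ diag(e^t, e^{-t})` is minimized at `e^t = √(a/d)`, i.e. at `t = (1/2)·log(a/d)`. -/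
theorem nearest_point_on_diagonal_geodesic (M : Matrix (Fin 2) (Fin 2) ℂ)
    (hM : M.PosDef) (hMdet : M.det = 1) :
    ∀ t : ℝ,
      hdist M (diagExp ((1 / 2) * Real.log ((M 0 0).re / (M 1 1).re)))
        ≤ hdist M (diagExp t) := by
  intro t
  obtain ⟨ha, hd, hn⟩ := NPDGAux.basic M hM hMdet
  set a := (M 0 0).re
  set d := (M 1 1).re
  have had : 1 ≤ a * d := by nlinarith [Complex.normSq_nonneg (M 0 1)]
  set t₀ := (1 / 2) * Real.log (a / d) with ht₀
  rw [NPDGAux.key M hM hMdet t₀, NPDGAux.key M hM hMdet t]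
  -- exp t₀ = sqrt (a/d)
  have he : Real.exp t₀ = Real.sqrt (a/d) := by
    rw [ht₀, show (1/2 : ℝ) * Real.log (a/d) = Real.log (Real.sqrt (a/d)) by
      rw [Real.log_sqrt (by positivity)]; ring]
    exact Real.exp_log (Real.sqrt_pos.2 (by positivity))
  have he' : Real.exp (-t₀) = Real.sqrt (d/a) := by
    rw [show -t₀ = (1/2) * Real.log (d/a) by
      rw [ht₀, Real.log_div (by positivity) (by positivity),
        Real.log_div (by positivity) (by positivity)]; ring]
    rw [show (1/2 : ℝ) * Real.log (d/a) = Real.log (Real.sqrt (d/a)) by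
      rw [Real.log_sqrt (by positivity)]; ring]
    exact Real.exp_log (Real.sqrt_pos.2 (by positivity))
  have hT0 : d * Real.exp t₀ + a * Real.exp (-t₀) = 2 * Real.sqrt (a*d) := by
    rw [he, he']
    have h1 : d * Real.sqrt (a/d) = Real.sqrt (a*d) := by
      rw [← Real.sqrt_sq hd.le, ← Real.sqrt_mul (sq_nonneg d)]
      congr 1
      field_simp
      rw [Real.sq_sqrt (sq_nonneg d)]
    have h2 : a * Real.sqrt (d/a) = Real.sqrt (a*d) := by
      rw [← Real.sqrt_sq ha.le, ← Real.sqrt_mul (sq_nonneg a)]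
      congr 1
      field_simp
      rw [Real.sq_sqrt (sq_nonneg a)]
    rw [h1, h2]; ring
  have hsq1 : 1 ≤ Real.sqrt (a*d) := by
    rw [show (1:ℝ) = Real.sqrt 1 by simp]
    exact Real.sqrt_le_sqrt had
  have hTt : 2 * Real.sqrt (a*d) ≤ d * Real.exp t + a * Real.exp (-t) := by
    have hEE' : Real.exp t * Real.exp (-t) = 1 := by rw [← Real.exp_add]; simp
    have h1 : Real.sqrt (d*Real.exp t) * Real.sqrt (a*Real.exp (-t)) = Real.sqrt (a*d) := by
      rw [← Real.sqrt_mul (by positivity)]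
      congr 1
      rw [show d*Real.exp t*(a*Real.exp (-t)) = a*d*(Real.exp t*Real.exp (-t)) by ring, hEE',
        mul_one]
    nlinarith [sq_nonneg (Real.sqrt (d*Real.exp t) - Real.sqrt (a*Real.exp (-t))),
      Real.sq_sqrt (by positivity : (0:ℝ) ≤ d*Real.exp t),
      Real.sq_sqrt (by positivity : (0:ℝ) ≤ a*Real.exp (-t)), h1]
  have h2T0 : 2 ≤ d * Real.exp t₀ + a * Real.exp (-t₀) := by rw [hT0]; linarith
  have hmono : NPDGAux.lam (d * Real.exp t₀ + a * Real.exp (-t₀))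
      ≤ NPDGAux.lam (d * Real.exp t + a * Real.exp (-t)) := by
    apply NPDGAux.lam_mono h2T0
    rw [hT0]; exact hTt
  have hpos : 0 < NPDGAux.lam (d * Real.exp t₀ + a * Real.exp (-t₀)) := by
    have := NPDGAux.lam_ge_one h2T0; linarith
  have := Real.log_le_log hpos hmono
  linarith
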